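/- Let H and H' be n×n Hermitian matrices with identical diagonals, H'_{ab} = -|H_{ab}| for a ≠ b, and H'_{aa} = H_{aa}. Then the smallest eigenvalue of H' is at most the smallest eigenvalue of H. -/

import Mathlib

open Matrix


open scoped ComplexOrder

lemma aux_iInf_eig_le {n : ℕ} [Nonempty (Fin n)] (M : Matrix (Fin n) (Fin n) ℂ)
    (hM : M.IsHermitian) (x : Fin n → ℂ) (hx : star x ⬝ᵥ x = 1) :
    (⨅ i, hM.eigenvalues i) ≤ (star x ⬝ᵥ M *ᵥ x).re := by
  set c := ⨅ i, hM.eigenvalues i with hc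
  have hci : ∀ i, c ≤ hM.eigenvalues i := fun i => ciInf_le (Finite.bddBelow_range _) i
  have hdiagpos : (diagonal (fun i => ((hM.eigenvalues i - c : ℝ) : ℂ))).PosSemidef := by
    refine PosSemidef.diagonal fun i => ?_
    simpa using sub_nonneg.mpr (hci i)
  have hdec : M - (c : ℂ) • 1 =
      (hM.eigenvectorUnitary : Matrix (Fin n) (Fin n) ℂ)
        * diagonal (fun i => ((hM.eigenvalues i - c : ℝ) : ℂ))
        * (hM.eigenvectorUnitary : Matrix (Fin n) (Fin n) ℂ)ᴴ := by
    have hd : diagonal (fun i => ((hM.eigenvalues i - c : ℝ) : ℂ))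
        = diagonal (RCLike.ofReal ∘ hM.eigenvalues) - (c : ℂ) • 1 := by
      rw [smul_one_eq_diagonal, diagonal_sub]
      ext i j
      rcases eq_or_ne i j with rfl | h
      · simp
      · simp [diagonal_apply_ne _ h]
    have hU : (hM.eigenvectorUnitary : Matrix (Fin n) (Fin n) ℂ)
        * (hM.eigenvectorUnitary : Matrix (Fin n) (Fin n) ℂ)ᴴ = 1 :=
      Matrix.mem_unitaryGroup_iff.mp (hM.eigenvectorUnitary).2
    rw [hd, mul_sub, sub_mul, Matrix.mul_smul, Matrix.smul_mul, Matrix.mul_one, hU]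
    congr 1
    exact hM.spectral_theorem
  have hps : (M - (c : ℂ) • 1).PosSemidef := by
    rw [hdec]
    exact hdiagpos.mul_mul_conjTranspose_same _
  have h0 := hps.re_dotProduct_nonneg x
  have hexp : star x ⬝ᵥ (M - (c : ℂ) • 1) *ᵥ x = star x ⬝ᵥ M *ᵥ x - (c : ℂ) := by
    rw [sub_mulVec, dotProduct_sub, smul_mulVec, one_mulVec, dotProduct_smul,
      smul_eq_mul, hx, mul_one]
  rw [hexp] at h0
  simp only [RCLike.re_to_complex, Complex.sub_re, Complex.ofReal_re] at h0
  linarith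

/-- Natural inequality, abstract form: if `H'` has the same diagonal as the
Hermitian matrix `H` and off-diagonal entries `-|H_{ab}|`, then the smallest
eigenvalue of `H'` is at most the smallest eigenvalue of `H`. -/
theorem smallest_eigenvalue_neg_abs_le
    (n : ℕ) (hn : 0 < n)
    (H : Matrix (Fin n) (Fin n) ℂ) (hH : H.IsHermitian)
    (H' : Matrix (Fin n) (Fin n) ℂ) (hH' : H'.IsHermitian)
    (hoff : ∀ a b, a ≠ b → H' a b = -(‖H a b‖ : ℂ))
    (hdiag : ∀ a, H' a a = H a a) :
    haveI : Nonempty (Fin n) := Fin.pos_iff_nonempty.mp hn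
    (⨅ i, hH'.eigenvalues i) ≤ ⨅ i, hH.eigenvalues i := by
  haveI : Nonempty (Fin n) := Fin.pos_iff_nonempty.mp hn
  obtain ⟨i₀, hi₀⟩ := exists_eq_ciInf_of_finite (f := hH.eigenvalues)
  set v : Fin n → ℂ := ⇑(hH.eigenvectorBasis i₀) with hvdef
  have hv1 : star v ⬝ᵥ v = 1 := by
    have h2 := orthonormal_iff_ite.mp hH.eigenvectorBasis.orthonormal i₀ i₀
    simp only [if_true, eq_self_iff_true] at h2
    rw [← h2]
    simp only [dotProduct, PiLp.inner_apply, RCLike.inner_apply, v, Pi.star_apply, RCLike.star_def]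
    exact Finset.sum_congr rfl fun _ _ => mul_comm _ _
  have hHv : star v ⬝ᵥ H *ᵥ v = ((hH.eigenvalues i₀ : ℝ) : ℂ) := by
    rw [hH.mulVec_eigenvectorBasis, dotProduct_smul, ← hvdef, hv1]
    simp
  set w : Fin n → ℂ := fun a => (‖v a‖ : ℂ) with hwdef
  have hw1 : star w ⬝ᵥ w = 1 := by
    rw [← hv1]
    apply Finset.sum_congr rfl
    intro a _
    simp only [Pi.star_apply, RCLike.star_def, w]
    rw [Complex.conj_ofReal, ← Complex.ofReal_mul, mul_comm ((starRingEnd ℂ) (v a)),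
      Complex.mul_conj]
    norm_cast
    rw [Complex.normSq_eq_norm_sq]
    ring
  have hterm : ∀ a b : Fin n,
      (star w a * (H' a b * w b)).re ≤ (star v a * (H a b * v b)).re := by
    intro a b
    rcases eq_or_ne a b with rfl | hab
    · have h1 : star w a * (H' a a * w a)
          = H a a * ((‖v a‖ * ‖v a‖ : ℝ) : ℂ) := by
        simp only [Pi.star_apply, RCLike.star_def, hdiag, w, Complex.conj_ofReal]
        push_cast
        ring
      have h2 : star v a * (H a a * v a)
          = H a a * ((‖v a‖ * ‖v a‖ : ℝ) : ℂ) := by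
        simp only [Pi.star_apply, RCLike.star_def]
        rw [mul_comm ((starRingEnd ℂ) (v a)), mul_assoc, Complex.mul_conj,
          Complex.normSq_eq_norm_sq]
        push_cast
        ring
      rw [h1, h2]
    · have hL : star w a * (H' a b * w b)
          = ((-(‖v a‖ * (‖H a b‖ * ‖v b‖)) : ℝ) : ℂ) := by
        simp only [Pi.star_apply, RCLike.star_def, w, Complex.conj_ofReal, hoff a b hab]
        push_cast
        ring
      rw [hL, Complex.ofReal_re]
      have habs : ‖star v a * (H a b * v b)‖
          = ‖v a‖ * (‖H a b‖ * ‖v b‖) := by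
        simp only [Pi.star_apply, RCLike.star_def, norm_mul, RCLike.norm_conj]
      calc -(‖v a‖ * (‖H a b‖ * ‖v b‖))
          = -‖star v a * (H a b * v b)‖ := by rw [habs]
        _ ≤ (star v a * (H a b * v b)).re :=
            neg_le_of_abs_le (Complex.abs_re_le_norm _)
  have expand : ∀ (M : Matrix (Fin n) (Fin n) ℂ) (x : Fin n → ℂ),
      (star x ⬝ᵥ M *ᵥ x).re = ∑ a, ∑ b, (star x a * (M a b * x b)).re := by
    intro M x
    simp only [dotProduct, mulVec, Complex.re_sum, Finset.mul_sum]
  have hsum : (star w ⬝ᵥ H' *ᵥ w).re ≤ (star v ⬝ᵥ H *ᵥ v).re := by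
    rw [expand, expand]
    exact Finset.sum_le_sum fun a _ => Finset.sum_le_sum fun b _ => hterm a b
  have h1 := aux_iInf_eig_le H' hH' w hw1
  have h2 : (star v ⬝ᵥ H *ᵥ v).re = hH.eigenvalues i₀ := by
    rw [hHv, Complex.ofReal_re]
  calc (⨅ i, hH'.eigenvalues i) ≤ (star w ⬝ᵥ H' *ᵥ w).re := h1
    _ ≤ (star v ⬝ᵥ H *ᵥ v).re := hsum
    _ = hH.eigenvalues i₀ := h2
    _ = ⨅ i, hH.eigenvalues i := hi₀
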